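/- Let n ≥ 1, let x, y : {1,…,n} → ℝ be nondecreasing (x_1 ≤ … ≤ x_n and y_1 ≤ … ≤ y_n), and let p ≥ 1 be a real number. Let u ∈ ℝ^n be the uniform probability vector with all entries 1/n. Then the infimum over P ∈ U(u,u) of ∑_{i,j} P_{ij} |x_i − y_j|^p is attained and equals (1/n) ∑_{i=1}^n |x_i − y_i|^p; in particular the identity matching of the sorted points is an optimal 1D transport plan. -/

import Mathlib

open Finset

-- convex exchange inequality
lemma aux_convex_two {f : ℝ → ℝ} (hf : ConvexOn ℝ Set.univ f) {a b u v : ℝ}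
    (hau : a ≤ u) (hub : u ≤ b) (huv : u + v = a + b) :
    f u + f v ≤ f a + f b := by
  rcases eq_or_lt_of_le (hau.trans hub) with h | h
  · have hua : u = a := le_antisymm (h ▸ hub) hau
    have hvb : v = b := by linarith
    simp [hua, hvb]
  · set l := (b - u) / (b - a) with hl
    have hba : 0 < b - a := by linarith
    have hl0 : 0 ≤ l := div_nonneg (by linarith) hba.le
    have hl1 : l ≤ 1 := by rw [hl, div_le_one hba]; linarith
    have hlba : l * (b - a) = b - u := div_mul_cancel₀ _ hba.ne'
    have hcomb : l * a + (1 - l) * b = u := by linear_combination -hlba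
    have hcomb' : (1 - l) * a + l * b = v := by linear_combination -huv - hcomb
    have h1 := hf.2 (Set.mem_univ a) (Set.mem_univ b) hl0 (sub_nonneg.mpr hl1)
      (by ring : l + (1 - l) = 1)
    have h2 := hf.2 (Set.mem_univ a) (Set.mem_univ b) (sub_nonneg.mpr hl1) hl0
      (by ring : (1 - l) + l = 1)
    simp only [smul_eq_mul] at h1 h2
    rw [hcomb] at h1; rw [hcomb'] at h2
    linarith

lemma aux_convexOn_abs_rpow {p : ℝ} (hp : 1 ≤ p) :
    ConvexOn ℝ Set.univ (fun t : ℝ => |t| ^ p) := by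
  have himg : (fun t : ℝ => |t|) '' Set.univ = Set.Ici 0 := by
    ext t
    constructor
    · rintro ⟨s, -, rfl⟩; exact abs_nonneg s
    · intro ht; exact ⟨t, Set.mem_univ t, abs_of_nonneg ht⟩
  have habs : ConvexOn ℝ Set.univ (fun t : ℝ => |t|) := by
    have h := convexOn_univ_norm (E := ℝ)
    exact ⟨h.1, fun a ha b hb s t hs ht hst => by simpa [Real.norm_eq_abs] using h.2 ha hb hs ht hst⟩
  have hg : ConvexOn ℝ ((fun t : ℝ => |t|) '' Set.univ) (fun s : ℝ => s ^ p) := by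
    rw [himg]; exact convexOn_rpow hp
  have hmono : MonotoneOn (fun s : ℝ => s ^ p) ((fun t : ℝ => |t|) '' Set.univ) := by
    rw [himg]
    intro a ha b _ hab
    exact Real.rpow_le_rpow ha hab (le_trans zero_le_one hp)
  exact hg.comp habs hmono

-- Monge ⇒ potential inequality, on ℕ
lemma aux_potential (C : ℕ → ℕ → ℝ)
    (hM : ∀ i i' j j', i ≤ i' → j ≤ j' → C i j + C i' j' ≤ C i j' + C i' j)
    (i j : ℕ) :
    (∑ k ∈ range i, (C (k+1) k - C k k)) + C j j - (∑ k ∈ range j, (C (k+1) k - C k k))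
      ≤ C i j := by
  set φ : ℕ → ℝ := fun m => ∑ k ∈ range m, (C (k+1) k - C k k) with hφ
  have hstep : ∀ m, φ (m+1) = φ m + (C (m+1) m - C m m) := by
    intro m; simp only [hφ]; rw [Finset.sum_range_succ]
  rcases le_total j i with h | h
  · obtain ⟨m, rfl⟩ := Nat.exists_eq_add_of_le h
    have key : ∀ m, C j j + φ (j+m) - φ j ≤ C (j+m) j := by
      intro m
      induction m with
      | zero => simp
      | succ m ih =>
        have hm := hM (j+m) (j+m+1) j (j+m) (by omega) (by omega)
        have := hstep (j+m)
        have : φ (j + (m+1)) = φ (j+m) + (C (j+m+1) (j+m) - C (j+m) (j+m)) := by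
          rw [show j + (m+1) = (j+m) + 1 by omega, hstep]
        rw [show j + (m+1) = (j+m) + 1 by omega]
        linarith
    linarith [key m]
  · obtain ⟨m, rfl⟩ := Nat.exists_eq_add_of_le h
    have key : ∀ m i, C (i+m) (i+m) ≤ C i (i+m) + φ (i+m) - φ i := by
      intro m
      induction m with
      | zero => intro i; simp
      | succ m ih =>
        intro i
        have h1 := ih (i+1)
        have hm := hM i (i+1) i (i+(m+1)) (by omega) (by omega)
        have h2 : φ (i+1) = φ i + (C (i+1) i - C i i) := hstep i
        rw [show i+1+m = i+(m+1) by omega] at h1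
        linarith
    linarith [key m i]

/-- The transportation polytope `U(a,b)`. -/
def transportPolytope {n m : ℕ} (a : Fin n → ℝ) (b : Fin m → ℝ) :
    Set (Fin n → Fin m → ℝ) :=
  {P | (∀ i j, 0 ≤ P i j) ∧ (∀ i, ∑ j, P i j = a i) ∧ (∀ j, ∑ i, P i j = b j)}

theorem stmt6 (n : ℕ) (hn : 1 ≤ n)
    (x y : Fin n → ℝ) (hx : Monotone x) (hy : Monotone y)
    (p : ℝ) (hp : 1 ≤ p)
    (u : Fin n → ℝ) (hu : ∀ i, u i = 1 / n) :
    IsLeast ((fun P => ∑ i, ∑ j, P i j * |x i - y j| ^ p) '' transportPolytope u u)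
        ((1 / n) * ∑ i, |x i - y i| ^ p)
    ∧ (fun i j => if i = j then (1 : ℝ) / n else 0) ∈ transportPolytope u u
    ∧ (∑ i, ∑ j, (if i = j then (1 : ℝ) / n else 0) * |x i - y j| ^ p)
        = (1 / n) * ∑ i, |x i - y i| ^ p := by
  -- extensions of x, y to ℕ
  set X : ℕ → ℝ := fun k => x ⟨min k (n-1), by omega⟩ with hX
  set Y : ℕ → ℝ := fun k => y ⟨min k (n-1), by omega⟩ with hY
  have hXmono : Monotone X := fun a b hab => hx (by simp [Fin.le_def]; omega)
  have hYmono : Monotone Y := fun a b hab => hy (by simp [Fin.le_def]; omega)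
  set C : ℕ → ℕ → ℝ := fun i j => |X i - Y j| ^ p with hC
  have hXval : ∀ i : Fin n, X i.val = x i := by
    intro i
    have hi := i.isLt
    simp only [hX]
    congr 1
    apply Fin.ext
    show min i.val (n-1) = i.val
    omega
  have hYval : ∀ j : Fin n, Y j.val = y j := by
    intro j
    have hj := j.isLt
    simp only [hY]
    congr 1
    apply Fin.ext
    show min j.val (n-1) = j.val
    omega
  have hCval : ∀ (i j : Fin n), C i.val j.val = |x i - y j| ^ p := by
    intro i j; simp only [hC, hXval, hYval]
  -- Monge condition
  have hM : ∀ i i' j j', i ≤ i' → j ≤ j' → C i j + C i' j' ≤ C i j' + C i' j := by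
    intro i i' j j' hii hjj
    have h1 := hXmono hii
    have h2 := hYmono hjj
    exact aux_convex_two (aux_convexOn_abs_rpow hp) (a := X i - Y j') (b := X i' - Y j)
      (u := X i - Y j) (v := X i' - Y j') (by linarith) (by linarith) (by ring)
  -- potentials
  set φ : ℕ → ℝ := fun m => ∑ k ∈ range m, (C (k+1) k - C k k) with hφ
  have hpot : ∀ (i j : Fin n), φ i.val + (C j.val j.val - φ j.val) ≤ |x i - y j| ^ p := by
    intro i j
    have h := aux_potential C hM i.val j.val
    rw [hCval i j] at h
    simp only [hφ]
    linarith [h]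
  have hnpos : (0:ℝ) < n := by positivity
  -- the lower bound
  have hlb : ∀ P ∈ transportPolytope u u,
      (1 / n) * ∑ i, |x i - y i| ^ p ≤ ∑ i, ∑ j, P i j * |x i - y j| ^ p := by
    intro P hP
    obtain ⟨hPnn, hProw, hPcol⟩ := hP
    have step1 : ∑ i, ∑ j, P i j * (φ i.val + (C j.val j.val - φ j.val))
        ≤ ∑ i, ∑ j, P i j * |x i - y j| ^ p := by
      apply Finset.sum_le_sum; intro i _
      apply Finset.sum_le_sum; intro j _
      exact mul_le_mul_of_nonneg_left (hpot i j) (hPnn i j)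
    have step2 : ∑ i, ∑ j, P i j * (φ i.val + (C j.val j.val - φ j.val))
        = (1 / n) * ∑ i, |x i - y i| ^ p := by
      have : ∀ i j : Fin n, P i j * (φ i.val + (C j.val j.val - φ j.val))
          = P i j * φ i.val + P i j * (C j.val j.val - φ j.val) := by
        intro i j; ring
      simp only [this, Finset.sum_add_distrib]
      rw [Finset.sum_comm (f := fun i j => P i j * (C j.val j.val - φ j.val))]
      have e1 : ∀ i : Fin n, ∑ j, P i j * φ i.val = (1/n) * φ i.val := by
        intro i; rw [← Finset.sum_mul, hProw i, hu i]
      have e2 : ∀ j : Fin n, ∑ i, P i j * (C j.val j.val - φ j.val)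
          = (1/n) * (C j.val j.val - φ j.val) := by
        intro j; rw [← Finset.sum_mul, hPcol j, hu j]
      simp only [e1, e2]
      rw [Finset.mul_sum, ← Finset.sum_add_distrib]
      apply Finset.sum_congr rfl
      intro i _
      rw [← hCval i i]
      ring
    linarith
  -- the diagonal matrix is in the polytope
  have hdiag : (fun i j => if i = j then (1 : ℝ) / n else 0) ∈ transportPolytope u u := by
    refine ⟨fun i j => ?_, fun i => ?_, fun j => ?_⟩
    · dsimp only; split <;> positivity
    · rw [hu i]; simp
    · rw [hu j]; simp
  -- its cost
  have hval : (∑ i, ∑ j, (if i = j then (1 : ℝ) / n else 0) * |x i - y j| ^ p)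
      = (1 / n) * ∑ i, |x i - y i| ^ p := by
    rw [Finset.mul_sum]
    apply Finset.sum_congr rfl
    intro i _
    rw [Finset.sum_eq_single i]
    · simp
    · intro j _ hji; simp [Ne.symm hji]
    · simp
  exact ⟨⟨⟨_, hdiag, hval⟩, by rintro _ ⟨P, hP, rfl⟩; exact hlb P hP⟩, hdiag, hval⟩
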